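/- Let n be a positive integer and let μ ⊆ λ be partitions with |λ| − |μ| = n. If λ/μ is a border strip (of size n), then det M(λ/μ) = (−1)^{spin(λ/μ)}; if λ/μ is not a border strip, then det M(λ/μ) = 0. -/

import Mathlib

open MvPolynomial

namespace Pleth

/-- A partition: a weakly decreasing, finitely supported sequence of natural
numbers (0-indexed: `parts i` is the (i+1)-st part). -/
structure Partition where
  parts : ℕ → ℕ
  antitone : ∀ ⦃i j : ℕ⦄, i ≤ j → parts j ≤ parts i
  finite : (Function.support parts).Finite

namespace Partition

/-- The empty partition. -/
def empty : Partition :=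
  ⟨fun _ => 0, fun _ _ _ => le_rfl, by simp [Function.support]⟩

/-- The size `|λ|` of a partition. -/
noncomputable def size (p : Partition) : ℕ := ∑ᶠ i, p.parts i

/-- The length `ℓ(λ)`: the number of nonzero parts. -/
noncomputable def length (p : Partition) : ℕ := (Function.support p.parts).ncard

/-- Containment of partitions: `Sub μ λ` means `μ ⊆ λ`. -/
def Sub (p q : Partition) : Prop := ∀ i, p.parts i ≤ q.parts i

/-- The cells (boxes) of the Young diagram, 0-indexed: `(i, j)` with `j < λ_{i+1}`. -/
def cells (p : Partition) : Set (ℕ × ℕ) := {c | c.2 < p.parts c.1}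

end Partition

/-- The cells of the skew diagram `λ/μ`. -/
def skew (mu lam : Partition) : Set (ℕ × ℕ) := lam.cells \ mu.cells

/-- Two boxes are adjacent if they share an edge. -/
def Adj (a b : ℕ × ℕ) : Prop :=
  (a.1 = b.1 ∧ (a.2 + 1 = b.2 ∨ b.2 + 1 = a.2)) ∨
    (a.2 = b.2 ∧ (a.1 + 1 = b.1 ∨ b.1 + 1 = a.1))

/-- A set of boxes is connected if any two of its boxes can be joined by a path
of edge-adjacent boxes inside the set. -/
def IsConnectedSet (S : Set (ℕ × ℕ)) : Prop :=
  ∀ a ∈ S, ∀ b ∈ S, Relation.ReflTransGen (fun x y => y ∈ S ∧ Adj x y) a b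

/-- `S` contains no 2×2 block of boxes. -/
def No2x2 (S : Set (ℕ × ℕ)) : Prop :=
  ¬ ∃ i j : ℕ, (i, j) ∈ S ∧ (i + 1, j) ∈ S ∧ (i, j + 1) ∈ S ∧ (i + 1, j + 1) ∈ S

/-- `λ/μ` is a border strip of size `d`: `μ ⊆ λ`, it has exactly `d` boxes,
it is connected, and contains no 2×2 block. -/
def IsBorderStrip (mu lam : Partition) (d : ℕ) : Prop :=
  Partition.Sub mu lam ∧ (skew mu lam).ncard = d ∧
    IsConnectedSet (skew mu lam) ∧ No2x2 (skew mu lam)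

/-- The spin of a skew diagram: its number of nonempty rows minus 1. -/
noncomputable def spin (S : Set (ℕ × ℕ)) : ℕ := (Prod.fst '' S).ncard - 1

/-- `b` is the starting box of `S`: the box in its topmost nonempty row and,
within that row, rightmost column. -/
def IsStartBox (S : Set (ℕ × ℕ)) (b : ℕ × ℕ) : Prop :=
  b ∈ S ∧ (∀ c ∈ S, b.1 ≤ c.1) ∧ (∀ c ∈ S, c.1 = b.1 → c.2 ≤ b.2)

/-- `(λ/μ)↑`: the boxes `(r, c)` of `S` such that `(r-1, c)` is not in `S`. -/
def up (S : Set (ℕ × ℕ)) : Set (ℕ × ℕ) :=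
  {b | b ∈ S ∧ ∀ r : ℕ, r + 1 = b.1 → (r, b.2) ∉ S}

/-- `α` is an `n`-border strip chain of weight `τ` from `μ` to `λ`. -/
def IsChain (n : ℕ) (mu lam : Partition) (τ : List ℕ) (α : ℕ → Partition) : Prop :=
  α 0 = mu ∧ α τ.length = lam ∧
    ∀ i : Fin τ.length, IsBorderStrip (α i) (α (i + 1)) (τ.get i * n)

/-- `α` is a horizontal `n`-border strip chain of weight `τ` from `μ` to `λ`:
the starting box of each strip in the chain lies in `(λ/μ)↑`. -/
def IsHorizontalChain (n : ℕ) (mu lam : Partition) (τ : List ℕ) (α : ℕ → Partition) : Prop :=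
  IsChain n mu lam τ α ∧
    ∀ i : Fin τ.length, ∃ b, IsStartBox (skew (α i) (α (i + 1))) b ∧ b ∈ up (skew mu lam)

/-- `λ/μ` is an `n`-border strip of weight `k`. -/
def IsWeightStrip (n k : ℕ) (mu lam : Partition) : Prop :=
  ∃ (τ : List ℕ) (α : ℕ → Partition),
    (∀ t ∈ τ, 0 < t) ∧ τ.sum = k ∧ IsChain n mu lam τ α

/-- `λ/μ` is a horizontal `n`-border strip of weight `k`: there is a horizontal
`n`-border strip chain of weight `(1, …, 1)` (`k` ones) from `μ` to `λ`. -/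
def IsHorizontalWeightStrip (n k : ℕ) (mu lam : Partition) : Prop :=
  ∃ α : ℕ → Partition, IsHorizontalChain n mu lam (List.replicate k 1) α

/-- The sign of a chain of length `k`: the product of the signs
`(-1)^{spin}` of its strips. -/
noncomputable def chainSign (α : ℕ → Partition) (k : ℕ) : ℤ :=
  ∏ i ∈ Finset.range k, (-1 : ℤ) ^ spin (skew (α i) (α (i + 1)))

open scoped Classical in
/-- The matrix `M(λ/μ)` (of size `l × l`, with `μ` padded by zero parts):
entry `(i,j)` is `1` if `λ_i - i ≥ μ_j - j` and `n ∣ (λ_i - i) - (μ_j - j)`,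
and `0` otherwise. -/
noncomputable def Mmat (n : ℕ) (mu lam : Partition) (l : ℕ) : Matrix (Fin l) (Fin l) ℤ :=
  Matrix.of fun i j : Fin l =>
    if ((mu.parts j : ℤ) - (j : ℤ) ≤ (lam.parts i : ℤ) - (i : ℤ) ∧
        (n : ℤ) ∣ ((lam.parts i : ℤ) - (i : ℤ) - ((mu.parts j : ℤ) - (j : ℤ)))) then 1 else 0

/-- The matrix `A(λ/μ)`: entry `(i,j)` is `λ_i - i - μ_j + j`. -/
def Amat (mu lam : Partition) (l : ℕ) : Matrix (Fin l) (Fin l) ℤ :=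
  Matrix.of fun i j : Fin l =>
    (lam.parts i : ℤ) - (i : ℤ) - (mu.parts j : ℤ) + (j : ℤ)

/-- `h_r` for an integer index `r`, with `h_r = 0` for `r < 0`. -/
noncomputable def hInt (N : ℕ) (r : ℤ) : MvPolynomial (Fin N) ℚ :=
  if 0 ≤ r then hsymm (Fin N) ℚ r.toNat else 0

/-- `e_r` for an integer index `r`, with `e_r = 0` for `r < 0`. -/
noncomputable def eInt (N : ℕ) (r : ℤ) : MvPolynomial (Fin N) ℚ :=
  if 0 ≤ r then esymm (Fin N) ℚ r.toNat else 0

/-- The Schur polynomial of a partition, via the Jacobi–Trudi determinant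
`det(h_{λ_i - i + j})_{i,j=1}^{ℓ(λ)}`. -/
noncomputable def schur (N : ℕ) (p : Partition) : MvPolynomial (Fin N) ℚ :=
  Matrix.det (Matrix.of fun i j : Fin p.length =>
    hInt N ((p.parts i : ℤ) - (i : ℤ) + (j : ℤ)))

/-- `h_m(x₁ⁿ, …, x_Nⁿ)`, i.e. the plethysm `p_n ∘ h_m`. -/
noncomputable def hpow (N n m : ℕ) : MvPolynomial (Fin N) ℚ :=
  aeval (fun i : Fin N => (X i : MvPolynomial (Fin N) ℚ) ^ n) (hsymm (Fin N) ℚ m)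

/-- `e_k(x₁ⁿ, …, x_Nⁿ)`, i.e. up to sign the plethysm `p_n ∘ e_k`. -/
noncomputable def epow (N n k : ℕ) : MvPolynomial (Fin N) ℚ :=
  aeval (fun i : Fin N => (X i : MvPolynomial (Fin N) ℚ) ^ n) (esymm (Fin N) ℚ k)

/-- `z_λ` for `λ : Nat.Partition m`. -/
def zcoeff {m : ℕ} (P : Nat.Partition m) : ℕ :=
  ∏ i ∈ P.parts.toFinset, i ^ (P.parts.count i) * (P.parts.count i).factorial

/-- The plethysm `h_n ∘ h_m` in `N` variables: the complete homogeneous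
symmetric polynomial `h_n` evaluated at the family of all monomials of total
degree `m` in `x₁, …, x_N`. -/
noncomputable def hcomp (N n m : ℕ) : MvPolynomial (Fin N) ℚ :=
  aeval (fun d : (Finset.Nat.antidiagonalTuple N m : Finset (Fin N → ℕ)) =>
      ∏ i : Fin N, (X i : MvPolynomial (Fin N) ℚ) ^ (d.1 i))
    (hsymm (Finset.Nat.antidiagonalTuple N m : Finset (Fin N → ℕ)) ℚ n)

/-- The sum, over all chains `∅ = λ⁽⁰⁾ ⊆ λ⁽¹⁾ ⊆ … ⊆ λ⁽ˡ⁾` of partitions such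
that `λ⁽ⁱ⁾/λ⁽ⁱ⁻¹⁾` is a horizontal `L_i`-border strip of weight `m` for each
`i`, of `(∏ᵢ det M^{(L_i)}(λ⁽ⁱ⁾/λ⁽ⁱ⁻¹⁾)) · s_{λ⁽ˡ⁾}`. -/
noncomputable def chainExpansion (N m : ℕ) (L : List ℕ) : MvPolynomial (Fin N) ℚ :=
  ∑ᶠ c : {c : Fin (L.length + 1) → Partition //
      c 0 = Partition.empty ∧
      ∀ i : Fin L.length, IsHorizontalWeightStrip (L.get i) m (c i.castSucc) (c i.succ)},
    ((∏ i : Fin L.length,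
        Matrix.det (Mmat (L.get i) (c.1 i.castSucc) (c.1 i.succ) (c.1 i.succ).length) : ℤ) :
      MvPolynomial (Fin N) ℚ) * schur N (c.1 (Fin.last L.length))

end Pleth

open Pleth

namespace MNaux

open Pleth Partition

lemma support_eq (p : Partition) : Function.support p.parts = Set.Iio p.length := by
  have hdc : ∀ {i j : ℕ}, i ≤ j → p.parts j ≠ 0 → p.parts i ≠ 0 := by
    intro i j hij hj
    have := p.antitone hij
    omega
  obtain ⟨k, hk⟩ : ∃ k, Function.support p.parts = Set.Iio k := by
    rcases Set.eq_empty_or_nonempty (Function.support p.parts) with h | h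
    · exact ⟨0, by rw [h]; ext i; simp⟩
    · have hne : p.finite.toFinset.Nonempty := by
        simpa [Set.Finite.toFinset] using h
      refine ⟨p.finite.toFinset.max' hne + 1, ?_⟩
      ext i
      simp only [Set.mem_Iio, Function.mem_support]
      constructor
      · intro hi
        have : i ∈ p.finite.toFinset := by simpa using hi
        exact Nat.lt_succ_of_le (Finset.le_max' _ _ this)
      · intro hi
        have hm : p.parts (p.finite.toFinset.max' hne) ≠ 0 := by
          simpa using p.finite.toFinset.max'_mem hne
        exact hdc (Nat.lt_succ_iff.mp hi) hm
  have hlen : p.length = k := by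
    unfold Partition.length
    rw [hk, ← Finset.coe_range, Set.ncard_coe_finset, Finset.card_range]
  rw [hk, hlen]

lemma parts_pos (p : Partition) {i : ℕ} (h : i < p.length) : 0 < p.parts i := by
  have : i ∈ Function.support p.parts := by rw [support_eq]; exact h
  exact Nat.pos_of_ne_zero this

lemma parts_eq_zero (p : Partition) {i : ℕ} (h : p.length ≤ i) : p.parts i = 0 := by
  by_contra hne
  have : i ∈ Function.support p.parts := hne
  rw [support_eq] at this
  simp only [Set.mem_Iio] at this
  omega

lemma parts_pos_iff (p : Partition) {i : ℕ} : 0 < p.parts i ↔ i < p.length := by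
  constructor
  · intro h
    by_contra hc
    have := parts_eq_zero p (le_of_not_gt hc)
    omega
  · exact parts_pos p

lemma size_eq_sum (p : Partition) {k : ℕ} (h : p.length ≤ k) :
    p.size = ∑ i ∈ Finset.range k, p.parts i := by
  unfold Partition.size
  refine finsum_eq_sum_of_support_subset _ ?_
  rw [support_eq]
  intro i hi
  simp only [Set.mem_Iio] at hi
  simp only [Finset.coe_range, Set.mem_Iio]
  omega

lemma length_mono {mu lam : Partition} (h : mu.Sub lam) : mu.length ≤ lam.length := by
  unfold Partition.length
  refine Set.ncard_le_ncard ?_ lam.finite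
  intro i hi
  have := h i
  simp only [Function.mem_support] at hi ⊢
  omega

lemma detlem {l : ℕ} (s : ℕ) (_hs : s < l) :
    ∀ d r : ℕ, r + d = s → ∀ A : Matrix (Fin l) (Fin l) ℤ,
    (∀ i j : Fin l, ((i : ℕ) < r ∨ s < (i : ℕ)) → (j : ℕ) < (i : ℕ) → A i j = 0) →
    (∀ i j : Fin l, r < (i : ℕ) → (i : ℕ) ≤ s → (j : ℕ) + 1 < (i : ℕ) → A i j = 0) →
    (∀ i j : Fin l, (i : ℕ) = r → (j : ℕ) < s → A i j = 0) →
    (∀ i : Fin l, ((i : ℕ) < r ∨ s < (i : ℕ)) → A i i = 1) →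
    (∀ i j : Fin l, r < (i : ℕ) → (i : ℕ) ≤ s → (j : ℕ) + 1 = (i : ℕ) → A i j = 1) →
    (∀ i j : Fin l, (i : ℕ) = r → (j : ℕ) = s → A i j = 1) →
    A.det = (-1) ^ d := by
  intro d
  induction d with
  | zero =>
    intro r hr A Z1 Z2 Z3 D1 D2 D3
    have hrs : r = s := by omega
    subst hrs
    have htri : A.BlockTriangular id := by
      intro i j hij
      have hij' : (j : ℕ) < (i : ℕ) := hij
      rcases Nat.lt_trichotomy (i : ℕ) r with h | h | h
      · exact Z1 i j (Or.inl h) hij'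
      · exact Z3 i j h (by omega)
      · exact Z1 i j (Or.inr h) hij'
    rw [Matrix.det_of_upperTriangular htri]
    simp only [pow_zero]
    refine Finset.prod_eq_one fun i _ => ?_
    rcases Nat.lt_trichotomy (i : ℕ) r with h | h | h
    · exact D1 i (Or.inl h)
    · exact D3 i i h h
    · exact D1 i (Or.inr h)
  | succ d ih =>
    intro r hr A Z1 Z2 Z3 D1 D2 D3
    have hr1l : r + 1 < l := by omega
    have hrl : r < l := by omega
    set i0 : Fin l := ⟨r, hrl⟩ with hi0
    set i1 : Fin l := ⟨r + 1, hr1l⟩ with hi1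
    have hne : i0 ≠ i1 := by
      simp only [hi0, hi1, Fin.ne_iff_vne]
      omega
    set σ : Equiv.Perm (Fin l) := Equiv.swap i0 i1 with hσ
    have hswap : ∀ i : Fin l, (i : ℕ) ≠ r → (i : ℕ) ≠ r + 1 → σ i = i := by
      intro i h1 h2
      refine Equiv.swap_apply_of_ne_of_ne ?_ ?_ <;>
        simp only [hi0, hi1, Fin.ne_iff_vne] <;> omega
    have hs0 : σ i0 = i1 := Equiv.swap_apply_left _ _
    have hs1 : σ i1 = i0 := Equiv.swap_apply_right _ _
    have hii0 : ∀ i : Fin l, (i : ℕ) = r → i = i0 := by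
      intro i h; exact Fin.ext (by simpa using h)
    have hii1 : ∀ i : Fin l, (i : ℕ) = r + 1 → i = i1 := by
      intro i h; exact Fin.ext (by simpa using h)
    have hB : Matrix.det (Matrix.of fun i j => A (σ i) j) = (-1) ^ d := by
      refine ih (r + 1) (by omega) _ ?_ ?_ ?_ ?_ ?_ ?_
      · intro i j h1 h2
        rcases h1 with h1 | h1
        · rcases Nat.lt_trichotomy (i : ℕ) r with h | h | h
          · rw [Matrix.of_apply, hswap i (by omega) (by omega)]
            exact Z1 i j (Or.inl h) h2
          · rw [Matrix.of_apply, hii0 i h, hs0]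
            exact Z2 i1 j (by simp [hi1]) (by simp [hi1]; omega) (by simp [hi1]; omega)
          · omega
        · rw [Matrix.of_apply, hswap i (by omega) (by omega)]
          exact Z1 i j (Or.inr h1) h2
      · intro i j h1 h2 h3
        rw [Matrix.of_apply, hswap i (by omega) (by omega)]
        exact Z2 i j (by omega) h2 (by omega)
      · intro i j h1 h2
        rw [Matrix.of_apply, hii1 i h1, hs1]
        exact Z3 i0 j (by simp [hi0]) h2
      · intro i h1
        rcases h1 with h1 | h1
        · rcases Nat.lt_trichotomy (i : ℕ) r with h | h | h
          · rw [Matrix.of_apply, hswap i (by omega) (by omega)]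
            exact D1 i (Or.inl h)
          · rw [Matrix.of_apply, hii0 i h, hs0]
            exact D2 i1 i0 (by simp [hi1]) (by simp [hi1]; omega) (by simp [hi0, hi1])
          · omega
        · rw [Matrix.of_apply, hswap i (by omega) (by omega)]
          exact D1 i (Or.inr h1)
      · intro i j h1 h2 h3
        rw [Matrix.of_apply, hswap i (by omega) (by omega)]
        exact D2 i j (by omega) h2 (by omega)
      · intro i j h1 h2
        rw [Matrix.of_apply, hii1 i h1, hs1]
        exact D3 i0 j (by simp [hi0]) h2
    have hperm : Matrix.det (Matrix.of fun i j => A (σ i) j) = Equiv.Perm.sign σ * A.det := by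
      exact Matrix.det_permute σ A
    rw [hB] at hperm
    have hsgn : Equiv.Perm.sign σ = -1 := Equiv.Perm.sign_swap hne
    rw [hsgn] at hperm
    have : ((-1 : ℤˣ) : ℤ) * A.det = -A.det := by simp
    rw [this] at hperm
    have : A.det = -(-1 : ℤ) ^ d := by omega
    rw [this]
    ring

/-- `λ_i - i` as an integer sequence. -/
def aseq (p : Partition) (i : ℕ) : ℤ := (p.parts i : ℤ) - i

lemma aseq_strictAnti (p : Partition) : StrictAnti (aseq p) := by
  intro i j hij
  have h1 := p.antitone (le_of_lt hij)
  unfold aseq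
  omega

/-- The β-number structure of a border strip. -/
def Beta (n : ℕ) (mu lam : Partition) (r s : ℕ) : Prop :=
  r ≤ s ∧ s < lam.length ∧
  (∀ i, i < r → mu.parts i = lam.parts i) ∧
  (∀ i, s < i → mu.parts i = lam.parts i) ∧
  (∀ i, r ≤ i → i < s → mu.parts i + 1 = lam.parts (i + 1)) ∧
  aseq lam r = aseq mu s + n

lemma Mmat_eq_zero {n : ℕ} {mu lam : Partition} {l : ℕ} {i j : Fin l}
    (h : ¬ ((mu.parts j : ℤ) - (j : ℤ) ≤ (lam.parts i : ℤ) - (i : ℤ) ∧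
        (n : ℤ) ∣ ((lam.parts i : ℤ) - (i : ℤ) - ((mu.parts j : ℤ) - (j : ℤ))))) :
    Mmat n mu lam l i j = 0 := by
  unfold Mmat
  simp only [Matrix.of_apply]
  exact if_neg h

lemma Mmat_eq_one {n : ℕ} {mu lam : Partition} {l : ℕ} {i j : Fin l}
    (h : (mu.parts j : ℤ) - (j : ℤ) ≤ (lam.parts i : ℤ) - (i : ℤ) ∧
        (n : ℤ) ∣ ((lam.parts i : ℤ) - (i : ℤ) - ((mu.parts j : ℤ) - (j : ℤ)))) :
    Mmat n mu lam l i j = 1 := by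
  unfold Mmat
  simp only [Matrix.of_apply]
  exact if_pos h

lemma fin_cast_int {l : ℕ} (i : Fin l) : ((i : ℕ) : ℤ) = (i : ℤ) := rfl

lemma aseq_cast {p : Partition} {l : ℕ} (i : Fin l) :
    aseq p (i : ℕ) = (p.parts i : ℤ) - (i : ℤ) := rfl

theorem beta_det {n : ℕ} (hn : 0 < n) {mu lam : Partition} {r s : ℕ}
    (hb : Beta n mu lam r s) :
    (Mmat n mu lam lam.length).det = (-1 : ℤ) ^ (s - r) := by
  obtain ⟨hrs, hsl, f1, f2, f3, f4⟩ := hb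
  have ha : StrictAnti (aseq lam) := aseq_strictAnti lam
  have hbb : StrictAnti (aseq mu) := aseq_strictAnti mu
  have e1 : ∀ i, i < r → aseq lam i = aseq mu i := by
    intro i h; unfold aseq; rw [f1 i h]
  have e2 : ∀ i, s < i → aseq lam i = aseq mu i := by
    intro i h; unfold aseq; rw [f2 i h]
  have e3 : ∀ i, r ≤ i → i < s → aseq mu i = aseq lam (i + 1) := by
    intro i h1 h2
    have := f3 i h1 h2
    unfold aseq
    omega
  -- value of `a r` is not attained by `b j` for `j < s`
  have key : ∀ j, j < s → aseq mu j ≠ aseq lam r := by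
    intro j hj hc
    rcases Nat.lt_or_ge j r with h | h
    · have := e1 j h
      have : aseq lam j = aseq lam r := by omega
      have := ha.injective this
      omega
    · have := e3 j h hj
      have : aseq lam (j + 1) = aseq lam r := by omega
      have := ha.injective this
      omega
  refine detlem s hsl (s - r) r (by omega) _ ?_ ?_ ?_ ?_ ?_ ?_
  · -- Z1
    intro i j h1 h2
    refine Mmat_eq_zero ?_
    rw [← aseq_cast, ← aseq_cast]
    have heq : aseq lam (i : ℕ) = aseq mu (i : ℕ) := by
      rcases h1 with h | h
      · exact e1 _ h
      · exact e2 _ h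
    have : aseq mu (i : ℕ) < aseq mu (j : ℕ) := hbb h2
    intro hc
    omega
  · -- Z2
    intro i j h1 h2 h3
    refine Mmat_eq_zero ?_
    rw [← aseq_cast, ← aseq_cast]
    have heq : aseq mu ((i : ℕ) - 1) = aseq lam (i : ℕ) := by
      have := e3 ((i : ℕ) - 1) (by omega) (by omega)
      have hh : (i : ℕ) - 1 + 1 = (i : ℕ) := by omega
      rw [hh] at this
      exact this
    have : aseq mu ((i : ℕ) - 1) < aseq mu (j : ℕ) := hbb (by omega)
    intro hc
    omega
  · -- Z3
    intro i j h1 h2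
    refine Mmat_eq_zero ?_
    rw [← aseq_cast, ← aseq_cast]
    rintro ⟨hle, hdvd⟩
    have hir : aseq lam (i : ℕ) = aseq lam r := by rw [h1]
    rw [hir] at hle hdvd
    have hgt : aseq mu s < aseq mu (j : ℕ) := hbb h2
    -- 0 ≤ a r - b j < n and divisible by n
    have h0 : 0 ≤ aseq lam r - aseq mu (j : ℕ) := by omega
    have h1' : aseq lam r - aseq mu (j : ℕ) < n := by omega
    have hz : aseq lam r - aseq mu (j : ℕ) = 0 := by
      rcases hdvd with ⟨c, hc⟩
      have hc0 : c = 0 := by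
        by_contra hc0
        rcases Int.lt_or_lt_of_ne hc0 with h | h
        · nlinarith [hc, h0]
        · nlinarith [hc, h1']
      rw [hc0, mul_zero] at hc
      exact hc
    exact key _ h2 (by omega)
  · -- D1
    intro i h1
    refine Mmat_eq_one ?_
    rw [← aseq_cast, ← aseq_cast]
    have heq : aseq lam (i : ℕ) = aseq mu (i : ℕ) := by
      rcases h1 with h | h
      · exact e1 _ h
      · exact e2 _ h
    constructor
    · omega
    · rw [heq]; simp
  · -- D2
    intro i j h1 h2 h3
    refine Mmat_eq_one ?_
    rw [← aseq_cast, ← aseq_cast]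
    have heq : aseq mu (j : ℕ) = aseq lam (i : ℕ) := by
      have := e3 (j : ℕ) (by omega) (by omega)
      rw [h3] at this
      exact this
    constructor
    · omega
    · rw [heq]; simp
  · -- D3
    intro i j h1 h2
    refine Mmat_eq_one ?_
    rw [← aseq_cast, ← aseq_cast]
    rw [h1, h2, f4]
    constructor
    · omega
    · simp

lemma adj_symm {a b : ℕ × ℕ} (h : Adj a b) : Adj b a := by
  unfold Adj at *
  omega

section BetaGeom

variable {n : ℕ} {mu lam : Partition} {r s : ℕ}

lemma beta_mem (hn : 0 < n) (hb : Beta n mu lam r s) :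
    ∀ i j : ℕ, ((i, j) ∈ skew mu lam ↔
      (r ≤ i ∧ i ≤ s ∧ mu.parts i ≤ j ∧ j < lam.parts i)) := by
  obtain ⟨hrs, hsl, f1, f2, f3, f4⟩ := hb
  intro i j
  simp only [skew, Set.mem_diff, Partition.cells, Set.mem_setOf_eq, not_lt]
  constructor
  · rintro ⟨h1, h2⟩
    refine ⟨?_, ?_, h2, h1⟩
    · by_contra hc
      have := f1 i (by omega)
      omega
    · by_contra hc
      have := f2 i (by omega)
      omega
  · rintro ⟨_, _, h3, h4⟩
    exact ⟨h4, h3⟩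

lemma beta_row_nonempty (hn : 0 < n) (hb : Beta n mu lam r s) :
    ∀ i : ℕ, r ≤ i → i ≤ s → mu.parts i < lam.parts i := by
  obtain ⟨hrs, hsl, f1, f2, f3, f4⟩ := hb
  have hs : mu.parts s < lam.parts s := by
    rcases Nat.lt_or_ge r s with h' | h'
    · have h3 := f3 (s - 1) (by omega) (by omega)
      have h'' : s - 1 + 1 = s := by omega
      rw [h''] at h3
      have := mu.antitone (show s - 1 ≤ s by omega)
      omega
    · have hrs' : r = s := by omega
      unfold aseq at f4
      rw [hrs'] at f4
      omega
  intro i h1 h2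
  rcases Nat.lt_or_ge i s with h | h
  · have := f3 i h1 h
    have := lam.antitone (show i ≤ i + 1 by omega)
    omega
  · have hh : i = s := by omega
    rw [hh]
    exact hs

lemma telescope' {mu lam : Partition} {r s : ℕ}
    (f3 : ∀ i, r ≤ i → i < s → mu.parts i + 1 = lam.parts (i + 1)) :
    ∀ t, r ≤ t → t ≤ s →
      ∑ i ∈ Finset.Icc r t, (aseq lam i - aseq mu i) = aseq lam r - aseq mu t := by
  intro t ht
  induction t, ht using Nat.le_induction with
  | base =>
    intro _
    simp
  | succ t ht ih =>
    intro hts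
    rw [Finset.sum_Icc_succ_top (by omega : r ≤ t + 1)]
    rw [ih (by omega)]
    have hbt : aseq mu t = aseq lam (t + 1) := by
      have := f3 t ht (by omega)
      unfold aseq
      omega
    omega

lemma beta_telescope (hn : 0 < n) (hb : Beta n mu lam r s) :
    ∀ t, r ≤ t → t ≤ s →
      ∑ i ∈ Finset.Icc r t, (aseq lam i - aseq mu i) = aseq lam r - aseq mu t :=
  telescope' hb.2.2.2.2.1

lemma beta_ncard (hn : 0 < n) (hsub : mu.Sub lam) (hb : Beta n mu lam r s) :
    (skew mu lam).ncard = n := by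
  classical
  set F : Finset (ℕ × ℕ) :=
    (Finset.Icc r s).biUnion
      (fun i => {i} ×ˢ Finset.Ico (mu.parts i) (lam.parts i)) with hF
  have hset : skew mu lam = ↑F := by
    ext ⟨i, j⟩
    rw [beta_mem hn hb]
    simp only [hF, Finset.coe_biUnion, Finset.mem_coe, Finset.mem_biUnion, Finset.mem_Icc,
      Finset.mem_product, Finset.mem_singleton, Finset.mem_Ico, Set.mem_iUnion]
    constructor
    · rintro ⟨h1, h2, h3, h4⟩
      exact ⟨i, ⟨⟨h1, h2⟩, rfl, h3, h4⟩⟩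
    · rintro ⟨k, ⟨⟨h1, h2⟩, hk, h3, h4⟩⟩
      subst hk
      exact ⟨h1, h2, h3, h4⟩
  rw [hset, Set.ncard_coe_finset]
  have hcard : F.card = ∑ i ∈ Finset.Icc r s, (lam.parts i - mu.parts i) := by
    rw [hF, Finset.card_biUnion]
    · refine Finset.sum_congr rfl fun i _ => ?_
      rw [Finset.card_product, Finset.card_singleton, Nat.card_Ico, one_mul]
    · intro x _ y _ hxy
      simp only [Finset.disjoint_left, Finset.mem_product, Finset.mem_singleton]
      rintro ⟨c1, c2⟩ ⟨h1, _⟩ ⟨h2, _⟩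
      exact hxy (h1.symm.trans h2 ▸ by rw [← h1, h2])
  rw [hcard]
  have hz : (↑(∑ i ∈ Finset.Icc r s, (lam.parts i - mu.parts i)) : ℤ) = (n : ℤ) := by
    push_cast [Nat.cast_sub (hsub _)]
    have h1 : ∑ i ∈ Finset.Icc r s, ((lam.parts i : ℤ) - (mu.parts i : ℤ)) =
        ∑ i ∈ Finset.Icc r s, (aseq lam i - aseq mu i) := by
      refine Finset.sum_congr rfl fun i _ => ?_
      unfold aseq
      ring
    rw [h1, beta_telescope hn hb s hb.1 le_rfl]
    have := hb.2.2.2.2.2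
    omega
  exact_mod_cast hz

lemma beta_spin (hn : 0 < n) (hb : Beta n mu lam r s) :
    spin (skew mu lam) = s - r := by
  have himg : Prod.fst '' skew mu lam = Set.Icc r s := by
    ext i
    simp only [Set.mem_image, Set.mem_Icc]
    constructor
    · rintro ⟨⟨i', j⟩, hmem, rfl⟩
      have := (beta_mem hn hb i' j).mp hmem
      exact ⟨this.1, this.2.1⟩
    · intro ⟨h1, h2⟩
      refine ⟨(i, mu.parts i), ?_, rfl⟩
      rw [beta_mem hn hb]
      exact ⟨h1, h2, le_rfl, beta_row_nonempty hn hb i h1 h2⟩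
  unfold spin
  rw [himg, ← Finset.coe_Icc, Set.ncard_coe_finset, Nat.card_Icc]
  omega

lemma beta_connected (hn : 0 < n) (hb : Beta n mu lam r s) :
    IsConnectedSet (skew mu lam) := by
  set S := skew mu lam with hS
  set rel' : ℕ × ℕ → ℕ × ℕ → Prop := fun x y => x ∈ S ∧ y ∈ S ∧ Adj x y with hrel
  have hmem := beta_mem hn hb
  have hsymm : Symmetric rel' := by
    rintro x y ⟨h1, h2, h3⟩
    exact ⟨h2, h1, adj_symm h3⟩
  have hmono : ∀ {x y}, Relation.ReflTransGen rel' x y →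
      Relation.ReflTransGen (fun x y => y ∈ S ∧ Adj x y) x y := by
    intro x y h
    exact Relation.ReflTransGen.mono (r := rel') (p := fun x y => y ∈ S ∧ Adj x y)
        (fun x y (hxy : rel' x y) => (⟨hxy.2.1, hxy.2.2⟩ : y ∈ S ∧ Adj x y)) _ _ h
  -- path within a row
  have hrow : ∀ i j1 : ℕ, (i, j1) ∈ S → ∀ j2, j1 ≤ j2 → (i, j2) ∈ S →
      Relation.ReflTransGen rel' (i, j1) (i, j2) := by
    intro i j1 h1 j2 hle
    induction j2, hle using Nat.le_induction with
    | base => intro _; exact Relation.ReflTransGen.refl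
    | succ j2 hj2 ih =>
      intro h2
      have hm2 : (i, j2) ∈ S := by
        rw [hmem] at h1 h2 ⊢
        omega
      exact Relation.ReflTransGen.tail (ih hm2) ⟨hm2, h2, Or.inl ⟨rfl, Or.inl rfl⟩⟩
  -- path from any cell to the anchor (s, mu.parts s)
  have hanchor : ∀ k i, r ≤ i → i + k = s → ∀ j, (i, j) ∈ S →
      Relation.ReflTransGen rel' (i, j) (s, mu.parts s) := by
    intro k
    induction k with
    | zero =>
      intro i hri his j hj
      have his' : i = s := by omega
      subst his'
      have hm : (i, mu.parts i) ∈ S := by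
        rw [hmem] at hj ⊢
        omega
      have hle : mu.parts i ≤ j := ((hmem i j).mp hj).2.2.1
      exact (@Relation.ReflTransGen.stdSymm _ rel' ⟨fun a b h => hsymm h⟩).symm _ _ (hrow i (mu.parts i) hm j hle hj)
    | succ k ih =>
      intro i hri his j hj
      have hlt : i < s := by omega
      have hf3 := hb.2.2.2.2.1 i hri hlt
      have hm1 : (i, mu.parts i) ∈ S := by
        rw [hmem] at hj ⊢
        omega
      have hm2 : (i + 1, mu.parts i) ∈ S := by
        rw [hmem]
        have := mu.antitone (Nat.le_succ i)
        refine ⟨by omega, by omega, this, by omega⟩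
      have p1 : Relation.ReflTransGen rel' (i, j) (i, mu.parts i) := by
        have hle : mu.parts i ≤ j := ((hmem i j).mp hj).2.2.1
        exact (@Relation.ReflTransGen.stdSymm _ rel' ⟨fun a b h => hsymm h⟩).symm _ _ (hrow i (mu.parts i) hm1 j hle hj)
      have p2 : Relation.ReflTransGen rel' (i, mu.parts i) (i + 1, mu.parts i) :=
        Relation.ReflTransGen.single ⟨hm1, hm2, Or.inr ⟨rfl, Or.inl rfl⟩⟩
      exact (p1.trans p2).trans (ih (i + 1) (by omega) (by omega) (mu.parts i) hm2)
  intro x hx y hy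
  obtain ⟨i, j⟩ := x
  obtain ⟨i', j'⟩ := y
  have hri : r ≤ i := ((hmem i j).mp hx).1
  have hsi : i ≤ s := ((hmem i j).mp hx).2.1
  have hri' : r ≤ i' := ((hmem i' j').mp hy).1
  have hsi' : i' ≤ s := ((hmem i' j').mp hy).2.1
  have p1 := hanchor (s - i) i hri (by omega) j hx
  have p2 := hanchor (s - i') i' hri' (by omega) j' hy
  exact hmono (p1.trans ((@Relation.ReflTransGen.stdSymm _ rel' ⟨fun a b h => hsymm h⟩).symm _ _ p2))

lemma beta_no2x2 (hn : 0 < n) (hb : Beta n mu lam r s) : No2x2 (skew mu lam) := by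
  have hmem := beta_mem hn hb
  rintro ⟨i, j, h1, h2, h3, h4⟩
  rw [hmem] at h1 h2 h3 h4
  have hlt : i < s := by omega
  have := hb.2.2.2.2.1 i (by omega) hlt
  omega

lemma beta_isBorderStrip (hn : 0 < n) (hsub : mu.Sub lam) (hb : Beta n mu lam r s) :
    IsBorderStrip mu lam n :=
  ⟨hsub, beta_ncard hn hsub hb, beta_connected hn hb, beta_no2x2 hn hb⟩

end BetaGeom

lemma skew_mem {mu lam : Partition} (i j : ℕ) :
    (i, j) ∈ skew mu lam ↔ mu.parts i ≤ j ∧ j < lam.parts i := by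
  simp only [skew, Set.mem_diff, Partition.cells, Set.mem_setOf_eq, not_lt]
  tauto

lemma sum_ab {n : ℕ} {mu lam : Partition} (hsub : mu.Sub lam)
    (hsize : mu.size + n = lam.size) :
    ∑ i ∈ Finset.range lam.length, (aseq lam i - aseq mu i) = n := by
  have hlen := length_mono hsub
  have h1 := size_eq_sum lam le_rfl
  have h2 := size_eq_sum mu hlen
  have h3 : ∑ i ∈ Finset.range lam.length, (aseq lam i - aseq mu i) =
      (∑ i ∈ Finset.range lam.length, (lam.parts i : ℤ)) -
        ∑ i ∈ Finset.range lam.length, (mu.parts i : ℤ) := by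
    rw [← Finset.sum_sub_distrib]
    refine Finset.sum_congr rfl fun i _ => ?_
    unfold aseq
    ring
  rw [h3, ← Nat.cast_sum, ← Nat.cast_sum, ← h1, ← h2]
  omega

lemma rtg_mem {S : Set (ℕ × ℕ)} {a b : ℕ × ℕ}
    (h : Relation.ReflTransGen (fun x y => y ∈ S ∧ Adj x y) a b) (ha : a ∈ S) : b ∈ S := by
  induction h with
  | refl => exact ha
  | tail _ h2 ih => exact h2.1

lemma cross {S : Set (ℕ × ℕ)} {a b : ℕ × ℕ}
    (h : Relation.ReflTransGen (fun x y => y ∈ S ∧ Adj x y) a b) (ha : a ∈ S) :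
    ∀ i, a.1 ≤ i → i < b.1 → ∃ c, (i, c) ∈ S ∧ (i + 1, c) ∈ S := by
  induction h with
  | refl => intro i h1 h2; omega
  | @tail m e h1 h2 ih =>
    intro i hi1 hi2
    rcases Nat.lt_or_ge i m.1 with hc | hc
    · exact ih i hi1 hc
    · -- m.1 ≤ i < e.1, step from m to e
      obtain ⟨he, hadj⟩ := h2
      have hm : m ∈ S := rtg_mem h1 ha
      have he1 : e.1 = m.1 + 1 ∧ e.2 = m.2 := by
        unfold Adj at hadj
        omega
      have him : i = m.1 := by omega
      refine ⟨m.2, ?_, ?_⟩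
      · rw [him]
        exact hm
      · have : (i + 1, m.2) = e := by
          ext
          · simp [him, he1.1]
          · simp [he1.2]
        rw [this]
        exact he

lemma borderStrip_beta {n : ℕ} {mu lam : Partition} (hn : 0 < n) (hsub : mu.Sub lam)
    (hsize : mu.size + n = lam.size) (hbs : IsBorderStrip mu lam n) :
    ∃ r s, Beta n mu lam r s := by
  classical
  obtain ⟨-, hcard, hconn, h2x2⟩ := hbs
  have hsum := sum_ab hsub hsize
  set l := lam.length with hl
  set F : Finset ℕ := (Finset.range l).filter (fun i => mu.parts i < lam.parts i) with hF
  have hFmem : ∀ i, i ∈ F ↔ mu.parts i < lam.parts i := by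
    intro i
    simp only [hF, Finset.mem_filter, Finset.mem_range]
    constructor
    · tauto
    · intro h
      refine ⟨?_, h⟩
      rw [hl, ← parts_pos_iff]
      omega
  have hFne : F.Nonempty := by
    by_contra hc
    rw [Finset.not_nonempty_iff_eq_empty] at hc
    have hz : ∀ i ∈ Finset.range l, aseq lam i - aseq mu i = 0 := by
      intro i _
      have : i ∉ F := by rw [hc]; exact Finset.notMem_empty i
      rw [hFmem] at this
      have := hsub i
      unfold aseq
      omega
    rw [Finset.sum_eq_zero hz] at hsum
    omega
  set r := F.min' hFne with hr
  set s := F.max' hFne with hs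
  have hrF : r ∈ F := F.min'_mem hFne
  have hsF : s ∈ F := F.max'_mem hFne
  have hrs : r ≤ s := F.min'_le s hsF
  have hsl : s < l := by
    have := hsF
    rw [hF, Finset.mem_filter, Finset.mem_range] at this
    exact this.1
  have f1 : ∀ i, i < r → mu.parts i = lam.parts i := by
    intro i hi
    have : i ∉ F := fun h => by have := F.min'_le i h; omega
    rw [hFmem] at this
    have := hsub i
    omega
  have f2 : ∀ i, s < i → mu.parts i = lam.parts i := by
    intro i hi
    have : i ∉ F := fun h => by have := F.le_max' i h; omega
    rw [hFmem] at this
    have := hsub i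
    omega
  have hrmem : (r, mu.parts r) ∈ skew mu lam := by
    rw [skew_mem]
    exact ⟨le_rfl, (hFmem r).mp hrF⟩
  have hsmem : (s, mu.parts s) ∈ skew mu lam := by
    rw [skew_mem]
    exact ⟨le_rfl, (hFmem s).mp hsF⟩
  have hcross : ∀ i, r ≤ i → i < s →
      ∃ c, (i, c) ∈ skew mu lam ∧ (i + 1, c) ∈ skew mu lam := by
    have hpath := hconn _ hrmem _ hsmem
    intro i h1 h2
    exact cross hpath hrmem i h1 h2
  have f3 : ∀ i, r ≤ i → i < s → mu.parts i + 1 = lam.parts (i + 1) := by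
    intro i h1 h2
    obtain ⟨c, hc1, hc2⟩ := hcross i h1 h2
    rw [skew_mem] at hc1 hc2
    have hle : mu.parts i + 1 ≤ lam.parts (i + 1) := by omega
    by_contra hne
    refine h2x2 ⟨i, mu.parts i, ?_, ?_, ?_, ?_⟩ <;> rw [skew_mem]
    · exact ⟨le_rfl, by omega⟩
    · have := mu.antitone (show i ≤ i + 1 by omega)
      exact ⟨by omega, by omega⟩
    · have := lam.antitone (show i ≤ i + 1 by omega)
      exact ⟨by omega, by omega⟩
    · have := mu.antitone (show i ≤ i + 1 by omega)
      exact ⟨by omega, by omega⟩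
  refine ⟨r, s, hrs, hsl, f1, f2, f3, ?_⟩
  -- the size condition
  have hsplit : ∑ i ∈ Finset.range l, (aseq lam i - aseq mu i) =
      ∑ i ∈ Finset.Icc r s, (aseq lam i - aseq mu i) := by
    refine (Finset.sum_subset ?_ ?_).symm
    · intro i hi
      rw [Finset.mem_Icc] at hi
      rw [Finset.mem_range]
      omega
    · intro i _ hi
      rw [Finset.mem_Icc] at hi
      have : mu.parts i = lam.parts i := by
        rcases Nat.lt_or_ge i r with h | h
        · exact f1 i h
        · exact f2 i (by omega)
      unfold aseq
      omega
  rw [hsplit, telescope' f3 s hrs le_rfl] at hsum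
  omega

lemma aseq_le {mu lam : Partition} (hsub : mu.Sub lam) (i : ℕ) :
    aseq mu i ≤ aseq lam i := by
  have := hsub i
  unfold aseq
  omega

lemma det_ne_zero_beta {n : ℕ} {mu lam : Partition} (hn : 0 < n) (hsub : mu.Sub lam)
    (hsize : mu.size + n = lam.size)
    (hdet : (Mmat n mu lam lam.length).det ≠ 0) :
    ∃ r s, Beta n mu lam r s := by
  classical
  set l := lam.length with hl
  -- extract a permutation with all entries equal to 1
  rw [Matrix.det_apply] at hdet
  obtain ⟨σ, -, hσ⟩ := Finset.exists_ne_zero_of_sum_ne_zero hdet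
  have hprod : ∏ i, Mmat n mu lam l (σ i) i ≠ 0 := by
    intro h
    rw [h, smul_zero] at hσ
    exact hσ rfl
  have hent : ∀ i : Fin l, Mmat n mu lam l (σ i) i ≠ 0 := by
    intro i
    exact Finset.prod_ne_zero_iff.mp hprod i (Finset.mem_univ i)
  set π : Equiv.Perm (Fin l) := σ⁻¹ with hπ
  have Hcond : ∀ j : Fin l,
      aseq mu ((π j : Fin l) : ℕ) ≤ aseq lam (j : ℕ) ∧
        (n : ℤ) ∣ (aseq lam (j : ℕ) - aseq mu ((π j : Fin l) : ℕ)) := by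
    intro j
    by_contra hc
    have h1 := hent (π j)
    rw [show σ (π j) = j from Equiv.apply_symm_apply σ j] at h1
    exact h1 (Mmat_eq_zero hc)
  set t : Fin l → ℤ := fun j => aseq lam (j : ℕ) - aseq mu ((π j : Fin l) : ℕ) with htdef
  have ht0 : ∀ j, 0 ≤ t j := fun j => by
    have := (Hcond j).1
    simp only [htdef]
    omega
  have htd : ∀ j, (n : ℤ) ∣ t j := fun j => (Hcond j).2
  have hsumt : ∑ j, t j = n := by
    have h1 : ∑ j : Fin l, aseq mu ((π j : Fin l) : ℕ) = ∑ j : Fin l, aseq mu (j : ℕ) :=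
      Equiv.sum_comp π (fun j : Fin l => aseq mu (j : ℕ))
    have h2 : ∑ j, t j = ∑ j : Fin l, aseq lam (j : ℕ) -
        ∑ j : Fin l, aseq mu ((π j : Fin l) : ℕ) := Finset.sum_sub_distrib _ _
    rw [h2, h1, ← Finset.sum_sub_distrib]
    have h3 : ∑ j : Fin l, (aseq lam (j : ℕ) - aseq mu (j : ℕ)) =
        ∑ i ∈ Finset.range l, (aseq lam i - aseq mu i) :=
      Fin.sum_univ_eq_sum_range (fun i => aseq lam i - aseq mu i) l
    rw [h3, hl]
    exact sum_ab hsub hsize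
  have hpos_ge : ∀ j, t j ≠ 0 → (n : ℤ) ≤ t j := by
    intro j h
    obtain ⟨c, hc⟩ := htd j
    have h0 := ht0 j
    have hc1 : 1 ≤ c := by
      rcases Int.lt_or_lt_of_ne (show c ≠ 0 from fun h' => h (by rw [hc, h', mul_zero])) with
        h' | h'
      · nlinarith
      · omega
    nlinarith
  obtain ⟨j0, hj0⟩ : ∃ j0, t j0 ≠ 0 := by
    by_contra hc
    push_neg at hc
    rw [Finset.sum_eq_zero (fun j _ => hc j)] at hsumt
    omega
  have huniq : ∀ j, j ≠ j0 → t j = 0 := by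
    intro j hne
    by_contra hc
    have hsub2 : ({j, j0} : Finset (Fin l)) ⊆ Finset.univ := Finset.subset_univ _
    have hle2 : ∑ i ∈ ({j, j0} : Finset (Fin l)), t i ≤ ∑ i, t i :=
      Finset.sum_le_sum_of_subset_of_nonneg hsub2 (fun i _ _ => ht0 i)
    rw [Finset.sum_pair hne] at hle2
    have := hpos_ge j hc
    have := hpos_ge j0 hj0
    omega
  have htj0 : t j0 = n := by
    have := Finset.sum_eq_single j0 (fun b _ hb => huniq b hb)
      (fun h => absurd (Finset.mem_univ j0) h)
    omega
  -- basic order facts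
  have hle : ∀ j : Fin l, j ≠ j0 → ((π j : Fin l) : ℕ) ≤ (j : ℕ) := by
    intro j hne
    have ht : t j = 0 := huniq j hne
    have h1 : aseq lam (j : ℕ) = aseq mu ((π j : Fin l) : ℕ) := by
      simp only [htdef] at ht
      omega
    have h2 := aseq_le hsub (j : ℕ)
    by_contra hc
    have := aseq_strictAnti mu (show (j : ℕ) < ((π j : Fin l) : ℕ) by omega)
    omega
  have hmono : ∀ j1 j2 : Fin l, j1 ≠ j0 → j2 ≠ j0 → (j1 : ℕ) < (j2 : ℕ) →
      ((π j1 : Fin l) : ℕ) < ((π j2 : Fin l) : ℕ) := by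
    intro j1 j2 h1 h2 hlt
    have e1 : aseq lam (j1 : ℕ) = aseq mu ((π j1 : Fin l) : ℕ) := by
      have := huniq j1 h1
      simp only [htdef] at this
      omega
    have e2 : aseq lam (j2 : ℕ) = aseq mu ((π j2 : Fin l) : ℕ) := by
      have := huniq j2 h2
      simp only [htdef] at this
      omega
    have hlam := aseq_strictAnti lam hlt
    rcases Nat.lt_trichotomy ((π j1 : Fin l) : ℕ) ((π j2 : Fin l) : ℕ) with h | h | h
    · exact h
    · exfalso
      have : (π j1 : Fin l) = (π j2 : Fin l) := Fin.ext h
      rw [this] at e1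
      omega
    · exfalso
      have := aseq_strictAnti mu h
      omega
  -- claim1 : below j0, π is the identity
  have claim1 : ∀ k : ℕ, ∀ j : Fin l, (j : ℕ) = k → (j : ℕ) < (j0 : ℕ) → π j = j := by
    intro k
    induction k using Nat.strong_induction_on with
    | _ k ih =>
      intro j hjk hjr
      have hne : j ≠ j0 := by
        intro h
        rw [h] at hjr
        omega
      have h1 := hle j hne
      rcases Nat.eq_or_lt_of_le h1 with h | h
      · exact Fin.ext h
      · exfalso
        set w : Fin l := π j with hw
        have hww : π w = w := ih (w : ℕ) (by omega) w rfl (by omega)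
        have : w = j := π.injective (by rw [hww])
        omega
  have hrs : (j0 : ℕ) ≤ ((π j0 : Fin l) : ℕ) := by
    by_contra hc
    set w : Fin l := π j0 with hw
    have hww : π w = w := claim1 (w : ℕ) w rfl (by omega)
    have : w = j0 := π.injective (by rw [hww])
    omega
  -- claim2 : above s = π j0, π is the identity
  have claim2 : ∀ m : ℕ, ∀ j : Fin l, ((π j0 : Fin l) : ℕ) < (j : ℕ) → l - (j : ℕ) ≤ m →
      π j = j := by
    intro m
    induction m with
    | zero =>
      intro j _ hm
      have := j.isLt
      omega
    | succ m ih =>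
      intro j hsj hlj
      have hne : j ≠ j0 := by
        intro h
        rw [h] at hsj
        omega
      set w : Fin l := π⁻¹ j with hw
      have hww : π w = j := Equiv.apply_symm_apply π j
      have hwne : w ≠ j0 := by
        intro h
        rw [h] at hww
        rw [← hww] at hsj
        omega
      have h1 : (j : ℕ) ≤ (w : ℕ) := by
        have := hle w hwne
        rw [hww] at this
        exact this
      rcases Nat.eq_or_lt_of_le h1 with h | h
      · have hjw : j = w := Fin.ext h
        rw [hjw] at hww ⊢
        exact hww
      · exfalso
        have hww2 : π w = w := ih w (by omega) (by have := w.isLt; omega)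
        rw [hww] at hww2
        omega
  -- the gap lemma
  have gap : ∀ k : ℕ, ∀ j1 j2 : Fin l, (j0 : ℕ) < (j1 : ℕ) → (j2 : ℕ) ≤ ((π j0 : Fin l) : ℕ) →
      (j1 : ℕ) + k = (j2 : ℕ) → ((π j1 : Fin l) : ℕ) + k ≤ ((π j2 : Fin l) : ℕ) := by
    intro k
    induction k with
    | zero =>
      intro j1 j2 _ _ h
      have : j1 = j2 := Fin.ext (by omega)
      rw [this]
      omega
    | succ k ih =>
      intro j1 j2 h1 h2 h3
      have hj2l := j2.isLt
      set jm : Fin l := ⟨(j2 : ℕ) - 1, by omega⟩ with hjm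
      have hm1 : ((π j1 : Fin l) : ℕ) + k ≤ ((π jm : Fin l) : ℕ) :=
        ih j1 jm h1 (by simp only [hjm]; omega) (by simp only [hjm]; omega)
      have hm2 : ((π jm : Fin l) : ℕ) < ((π j2 : Fin l) : ℕ) := by
        refine hmono jm j2 ?_ ?_ ?_
        · intro h
          have : (jm : ℕ) = (j0 : ℕ) := by rw [h]
          simp only [hjm] at this
          omega
        · intro h
          have : (j2 : ℕ) = (j0 : ℕ) := by rw [h]
          omega
        · simp only [hjm]
          omega
      omega
  -- claim3 : strictly between, π shifts down by one
  have claim3 : ∀ j : Fin l, (j0 : ℕ) < (j : ℕ) → (j : ℕ) ≤ ((π j0 : Fin l) : ℕ) →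
      ((π j : Fin l) : ℕ) = (j : ℕ) - 1 := by
    intro j hj1 hj2
    have hjl := j.isLt
    set r1 : Fin l := ⟨(j0 : ℕ) + 1, by omega⟩ with hr1
    set s' : Fin l := π j0 with hs'
    have hs'ne : s' ≠ j0 := by
      intro h
      have : (s' : ℕ) = (j0 : ℕ) := by rw [h]
      omega
    have hlow : (j0 : ℕ) ≤ ((π r1 : Fin l) : ℕ) := by
      by_contra hc
      set w : Fin l := π r1 with hw
      have hww : π w = w := claim1 (w : ℕ) w rfl (by omega)
      have : w = r1 := π.injective (by rw [hww])
      have : (w : ℕ) = (r1 : ℕ) := by rw [this]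
      simp only [hr1] at this
      omega
    have hstop : ((π s' : Fin l) : ℕ) ≤ (s' : ℕ) - 1 := by
      have h1 := hle s' hs'ne
      have h2 : π s' ≠ π j0 := fun h => hs'ne (π.injective h)
      have h3 : ((π s' : Fin l) : ℕ) ≠ (s' : ℕ) := by
        intro h
        exact h2 (Fin.ext (by rw [h]))
      omega
    have g1 := gap ((j : ℕ) - (j0 : ℕ) - 1) r1 j
      (by show (j0 : ℕ) < (j0 : ℕ) + 1; omega) hj2
      (by show (j0 : ℕ) + 1 + ((j : ℕ) - (j0 : ℕ) - 1) = (j : ℕ); omega)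
    have g2 := gap (((π j0 : Fin l) : ℕ) - (j : ℕ)) j s' hj1 (le_refl _) (by omega)
    omega
  -- assemble the Beta structure
  refine ⟨(j0 : ℕ), ((π j0 : Fin l) : ℕ), hrs, (π j0).isLt, ?_, ?_, ?_, ?_⟩
  · intro i hi
    have hil : i < l := by have := j0.isLt; omega
    have hid : π ⟨i, hil⟩ = ⟨i, hil⟩ := claim1 i ⟨i, hil⟩ rfl (by show i < (j0 : ℕ); omega)
    have hne : (⟨i, hil⟩ : Fin l) ≠ j0 := by
      intro h
      have : i = (j0 : ℕ) := by rw [← h]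
      omega
    have ht := huniq _ hne
    have ht2 : aseq lam i - aseq mu (((π ⟨i, hil⟩ : Fin l)) : ℕ) = 0 := ht
    rw [hid] at ht2
    have ht3 : aseq lam i - aseq mu i = 0 := ht2
    unfold aseq at ht3
    omega
  · intro i hi
    rcases Nat.lt_or_ge i l with hil | hil
    · have hid : π ⟨i, hil⟩ = ⟨i, hil⟩ :=
        claim2 (l - i) ⟨i, hil⟩ (by show ((π j0 : Fin l) : ℕ) < i; omega)
          (by show l - i ≤ l - i; omega)
      have hne : (⟨i, hil⟩ : Fin l) ≠ j0 := by
        intro h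
        have h2 : i = (j0 : ℕ) := by rw [← h]
        have := hrs
        omega
      have ht := huniq _ hne
      have ht2 : aseq lam i - aseq mu (((π ⟨i, hil⟩ : Fin l)) : ℕ) = 0 := ht
      rw [hid] at ht2
      have ht3 : aseq lam i - aseq mu i = 0 := ht2
      unfold aseq at ht3
      omega
    · have h1 := parts_eq_zero lam (show lam.length ≤ i from hil)
      have h2 := hsub i
      omega
  · intro i h1 h2
    have hil : i + 1 < l := by have := (π j0 : Fin l).isLt; omega
    have hval : ((π ⟨i + 1, hil⟩ : Fin l) : ℕ) = i := by
      have := claim3 ⟨i + 1, hil⟩ (by show (j0 : ℕ) < i + 1; omega)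
        (by show i + 1 ≤ ((π j0 : Fin l) : ℕ); omega)
      have h3 : ((π ⟨i + 1, hil⟩ : Fin l) : ℕ) = (i + 1) - 1 := this
      omega
    have hne : (⟨i + 1, hil⟩ : Fin l) ≠ j0 := by
      intro h
      have h3 : i + 1 = (j0 : ℕ) := by rw [← h]
      omega
    have ht := huniq _ hne
    have ht2 : aseq lam (i + 1) - aseq mu (((π ⟨i + 1, hil⟩ : Fin l)) : ℕ) = 0 := ht
    rw [hval] at ht2
    unfold aseq at ht2
    omega
  · have ht2 : aseq lam ((j0 : Fin l) : ℕ) - aseq mu ((π j0 : Fin l) : ℕ) = (n : ℤ) := htj0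
    omega

end MNaux
/-- The `k = 1` determinant-type Murnaghan–Nakayama rule: for `|λ| − |μ| = n`,
`det M(λ/μ) = (−1)^{spin(λ/μ)}` if `λ/μ` is a border strip, and `0` otherwise. -/
theorem det_M_border_strip (n : ℕ) (hn : 0 < n) (mu lam : Partition)
    (hsub : mu.Sub lam) (hsize : mu.size + n = lam.size) :
    (IsBorderStrip mu lam n →
      Matrix.det (Mmat n mu lam lam.length) = (-1 : ℤ) ^ spin (skew mu lam)) ∧
    (¬ IsBorderStrip mu lam n → Matrix.det (Mmat n mu lam lam.length) = 0) := by
  constructor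
  · intro hbs
    obtain ⟨r, s, hb⟩ := MNaux.borderStrip_beta hn hsub hsize hbs
    rw [MNaux.beta_spin hn hb]
    exact MNaux.beta_det hn hb
  · intro hnbs
    by_contra hdet
    obtain ⟨r, s, hb⟩ := MNaux.det_ne_zero_beta hn hsub hsize hdet
    exact hnbs (MNaux.beta_isBorderStrip hn hsub hb)
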